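/- Let u be an analytic function on an open subset U of ℂ³ (with coordinates (x₁,x₂,η)) on which η ≠ 0. Then u satisfies the three equations P₁u = 0, P₂u = 0, P₃u = 0 if and only if u satisfies the two equations Q₁u = 0, Q₂u = 0. -/

import Mathlib

/-- Partial derivative in the first variable `x₁`. -/
noncomputable def D1 (f : ℂ → ℂ → ℂ → ℂ) : ℂ → ℂ → ℂ → ℂ :=
  fun a b c => deriv (fun w => f w b c) a

/-- Partial derivative in the second variable `x₂`. -/
noncomputable def D2 (f : ℂ → ℂ → ℂ → ℂ) : ℂ → ℂ → ℂ → ℂ :=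
  fun a b c => deriv (fun w => f a w c) b

/-- `P₁ = 4∂₁∂₂ + 2ηx₂∂₁ + η²x₁`. -/
noncomputable def P1 (f : ℂ → ℂ → ℂ → ℂ) : ℂ → ℂ → ℂ → ℂ :=
  fun a b c => 4 * D1 (D2 f) a b c + 2 * c * b * D1 f a b c + c ^ 2 * a * f a b c

/-- `P₂ = 4∂₂² + ηx₁∂₁ + 2ηx₂∂₂ + η`. -/
noncomputable def P2 (f : ℂ → ℂ → ℂ → ℂ) : ℂ → ℂ → ℂ → ℂ :=
  fun a b c => 4 * D2 (D2 f) a b c + c * a * D1 f a b c + 2 * c * b * D2 f a b c + c * f a b c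

/-- `P₃ = η∂₂ − ∂₁²`. -/
noncomputable def P3 (f : ℂ → ℂ → ℂ → ℂ) : ℂ → ℂ → ℂ → ℂ :=
  fun a b c => c * D2 f a b c - D1 (D1 f) a b c

/-- `Q₁ = 4∂₁³ + 2η²x₂∂₁ + η³x₁`. -/
noncomputable def Q1 (f : ℂ → ℂ → ℂ → ℂ) : ℂ → ℂ → ℂ → ℂ :=
  fun a b c => 4 * D1 (D1 (D1 f)) a b c + 2 * c ^ 2 * b * D1 f a b c + c ^ 3 * a * f a b c

/-- `Q₂ = η∂₂ − ∂₁²`. -/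
noncomputable def Q2 (f : ℂ → ℂ → ℂ → ℂ) : ℂ → ℂ → ℂ → ℂ := P3 f

/-- Directional derivative of a function on `ℂ³`. -/
noncomputable def Ed (v : ℂ × ℂ × ℂ) (G : ℂ × ℂ × ℂ → ℂ) : ℂ × ℂ × ℂ → ℂ :=
  fun p => fderiv ℂ G p v

/-- First basis vector. -/
def v1 : ℂ × ℂ × ℂ := (1, 0, 0)
/-- Second basis vector. -/
def v2 : ℂ × ℂ × ℂ := (0, 1, 0)

private lemma Ed_analytic (v : ℂ × ℂ × ℂ) {U : Set (ℂ × ℂ × ℂ)} {G : ℂ × ℂ × ℂ → ℂ}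
    (hG : AnalyticOnNhd ℂ G U) : AnalyticOnNhd ℂ (Ed v G) U :=
  (ContinuousLinearMap.apply ℂ ℂ v).comp_analyticOnNhd hG.fderiv

private lemma slice1_hasDerivAt {G : ℂ × ℂ × ℂ → ℂ} {a b c : ℂ}
    (hG : DifferentiableAt ℂ G (a, b, c)) :
    HasDerivAt (fun w => G (w, b, c)) (Ed v1 G (a, b, c)) a := by
  have h1 : HasDerivAt (fun w : ℂ => (w, b, c)) v1 a :=
    HasDerivAt.prodMk (hasDerivAt_id a) (HasDerivAt.prodMk (hasDerivAt_const a b) (hasDerivAt_const a c))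
  exact HasFDerivAt.comp_hasDerivAt (l := G) (f := fun w : ℂ => (w, b, c)) a
    hG.hasFDerivAt h1

private lemma slice2_hasDerivAt {G : ℂ × ℂ × ℂ → ℂ} {a b c : ℂ}
    (hG : DifferentiableAt ℂ G (a, b, c)) :
    HasDerivAt (fun w => G (a, w, c)) (Ed v2 G (a, b, c)) b := by
  have h1 : HasDerivAt (fun w : ℂ => (a, w, c)) v2 b :=
    HasDerivAt.prodMk (hasDerivAt_const b a) (HasDerivAt.prodMk (hasDerivAt_id b) (hasDerivAt_const b c))
  exact HasFDerivAt.comp_hasDerivAt (l := G) (f := fun w : ℂ => (a, w, c)) b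
    hG.hasFDerivAt h1

private lemma D1_congrU {U : Set (ℂ × ℂ × ℂ)} (hU : IsOpen U) {f : ℂ → ℂ → ℂ → ℂ}
    (g : ℂ → ℂ → ℂ → ℂ)
    (h : ∀ q ∈ U, f q.1 q.2.1 q.2.2 = g q.1 q.2.1 q.2.2) {p : ℂ × ℂ × ℂ} (hp : p ∈ U) :
    D1 f p.1 p.2.1 p.2.2 = D1 g p.1 p.2.1 p.2.2 := by
  refine Filter.EventuallyEq.deriv_eq ?_
  have hopen : IsOpen {w : ℂ | (w, p.2.1, p.2.2) ∈ U} := hU.preimage (by fun_prop)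
  have hmem : p.1 ∈ {w : ℂ | (w, p.2.1, p.2.2) ∈ U} := hp
  filter_upwards [hopen.mem_nhds hmem] with w hw
  exact h (w, p.2.1, p.2.2) hw

private lemma D2_congrU {U : Set (ℂ × ℂ × ℂ)} (hU : IsOpen U) {f : ℂ → ℂ → ℂ → ℂ}
    (g : ℂ → ℂ → ℂ → ℂ)
    (h : ∀ q ∈ U, f q.1 q.2.1 q.2.2 = g q.1 q.2.1 q.2.2) {p : ℂ × ℂ × ℂ} (hp : p ∈ U) :
    D2 f p.1 p.2.1 p.2.2 = D2 g p.1 p.2.1 p.2.2 := by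
  refine Filter.EventuallyEq.deriv_eq ?_
  have hopen : IsOpen {w : ℂ | (p.1, w, p.2.2) ∈ U} := hU.preimage (by fun_prop)
  have hmem : p.2.1 ∈ {w : ℂ | (p.1, w, p.2.2) ∈ U} := hp
  filter_upwards [hopen.mem_nhds hmem] with w hw
  exact h (p.1, w, p.2.2) hw

private lemma D1_zeroU {U : Set (ℂ × ℂ × ℂ)} (hU : IsOpen U) {f : ℂ → ℂ → ℂ → ℂ}
    (h : ∀ q ∈ U, f q.1 q.2.1 q.2.2 = 0) {p : ℂ × ℂ × ℂ} (hp : p ∈ U) :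
    D1 f p.1 p.2.1 p.2.2 = 0 :=
  (D1_congrU hU (fun _ _ _ => 0) h hp).trans (deriv_const _ _)

private lemma D2_zeroU {U : Set (ℂ × ℂ × ℂ)} (hU : IsOpen U) {f : ℂ → ℂ → ℂ → ℂ}
    (h : ∀ q ∈ U, f q.1 q.2.1 q.2.2 = 0) {p : ℂ × ℂ × ℂ} (hp : p ∈ U) :
    D2 f p.1 p.2.1 p.2.2 = 0 :=
  (D2_congrU hU (fun _ _ _ => 0) h hp).trans (deriv_const _ _)

/-- Symmetry of second derivatives for analytic functions. -/
private lemma Ed_symm {U : Set (ℂ × ℂ × ℂ)} (hU : IsOpen U) {G : ℂ × ℂ × ℂ → ℂ}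
    (hG : AnalyticOnNhd ℂ G U) {p : ℂ × ℂ × ℂ} (hp : p ∈ U) (v w : ℂ × ℂ × ℂ) :
    Ed w (Ed v G) p = Ed v (Ed w G) p := by
  have hdf : DifferentiableAt ℂ (fderiv ℂ G) p := ((hG.fderiv) p hp).differentiableAt
  have key : ∀ z : ℂ × ℂ × ℂ, fderiv ℂ (Ed z G) p
      = (ContinuousLinearMap.apply ℂ ℂ z).comp (fderiv ℂ (fderiv ℂ G) p) := by
    intro z
    exact (((ContinuousLinearMap.apply ℂ ℂ z).hasFDerivAt).comp p hdf.hasFDerivAt).fderiv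
  show fderiv ℂ (Ed v G) p w = fderiv ℂ (Ed w G) p v
  rw [key v, key w]
  simp only [ContinuousLinearMap.coe_comp', Function.comp_apply,
    ContinuousLinearMap.apply_apply]
  have hev : ∀ᶠ y in nhds p, HasFDerivAt G (fderiv ℂ G y) y := by
    filter_upwards [hU.mem_nhds hp] with y hy
    exact ((hG y hy).differentiableAt).hasFDerivAt
  exact second_derivative_symmetric_of_eventually hev hdf.hasFDerivAt w v

private lemma Ed_congrU {U : Set (ℂ × ℂ × ℂ)} (hU : IsOpen U) {G H : ℂ × ℂ × ℂ → ℂ}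
    (h : ∀ q ∈ U, G q = H q) {p : ℂ × ℂ × ℂ} (hp : p ∈ U) (v : ℂ × ℂ × ℂ) :
    Ed v G p = Ed v H p := by
  have hev : G =ᶠ[nhds p] H := by
    filter_upwards [hU.mem_nhds hp] with q hq using h q hq
  show fderiv ℂ G p v = fderiv ℂ H p v
  rw [hev.fderiv_eq]

/-- For an analytic function `u` on an open set where `η ≠ 0`, the system
`P₁u = P₂u = P₃u = 0` is equivalent to the system `Q₁u = Q₂u = 0`. -/
theorem pearcey_system_equivalence
    (U : Set (ℂ × ℂ × ℂ)) (hU : IsOpen U)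
    (hη : ∀ p : ℂ × ℂ × ℂ, p ∈ U → p.2.2 ≠ 0)
    (u : ℂ → ℂ → ℂ → ℂ)
    (hu : AnalyticOnNhd ℂ (fun p : ℂ × ℂ × ℂ => u p.1 p.2.1 p.2.2) U) :
    (∀ p : ℂ × ℂ × ℂ, p ∈ U →
        P1 u p.1 p.2.1 p.2.2 = 0 ∧ P2 u p.1 p.2.1 p.2.2 = 0 ∧ P3 u p.1 p.2.1 p.2.2 = 0)
      ↔ (∀ p : ℂ × ℂ × ℂ, p ∈ U →
        Q1 u p.1 p.2.1 p.2.2 = 0 ∧ Q2 u p.1 p.2.1 p.2.2 = 0) := by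
  set F : ℂ × ℂ × ℂ → ℂ := fun q => u q.1 q.2.1 q.2.2 with hFdef
  have hF : AnalyticOnNhd ℂ F U := hu
  -- transfer helpers
  have T1 : ∀ {f : ℂ → ℂ → ℂ → ℂ} {G : ℂ × ℂ × ℂ → ℂ}, AnalyticOnNhd ℂ G U →
      (∀ q ∈ U, f q.1 q.2.1 q.2.2 = G q) →
      ∀ q ∈ U, D1 f q.1 q.2.1 q.2.2 = Ed v1 G q := by
    intro f G hG h q hq
    rw [D1_congrU hU (fun a b c => G (a, b, c)) (fun q hq => h q hq) hq]
    exact (slice1_hasDerivAt ((hG q hq).differentiableAt)).deriv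
  have T2 : ∀ {f : ℂ → ℂ → ℂ → ℂ} {G : ℂ × ℂ × ℂ → ℂ}, AnalyticOnNhd ℂ G U →
      (∀ q ∈ U, f q.1 q.2.1 q.2.2 = G q) →
      ∀ q ∈ U, D2 f q.1 q.2.1 q.2.2 = Ed v2 G q := by
    intro f G hG h q hq
    rw [D2_congrU hU (fun a b c => G (a, b, c)) (fun q hq => h q hq) hq]
    exact (slice2_hasDerivAt ((hG q hq).differentiableAt)).deriv
  have hE1 : ∀ q ∈ U, D1 u q.1 q.2.1 q.2.2 = Ed v1 F q := T1 hF (fun _ _ => rfl)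
  have hE2 : ∀ q ∈ U, D2 u q.1 q.2.1 q.2.2 = Ed v2 F q := T2 hF (fun _ _ => rfl)
  have hA1 : AnalyticOnNhd ℂ (Ed v1 F) U := Ed_analytic v1 hF
  have hA2 : AnalyticOnNhd ℂ (Ed v2 F) U := Ed_analytic v2 hF
  have hA11 : AnalyticOnNhd ℂ (Ed v1 (Ed v1 F)) U := Ed_analytic v1 hA1
  have hA12 : AnalyticOnNhd ℂ (Ed v1 (Ed v2 F)) U := Ed_analytic v1 hA2
  have hA111 : AnalyticOnNhd ℂ (Ed v1 (Ed v1 (Ed v1 F))) U := Ed_analytic v1 hA11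
  have hE11 : ∀ q ∈ U, D1 (D1 u) q.1 q.2.1 q.2.2 = Ed v1 (Ed v1 F) q := T1 hA1 hE1
  have hE12 : ∀ q ∈ U, D1 (D2 u) q.1 q.2.1 q.2.2 = Ed v1 (Ed v2 F) q := T1 hA2 hE2
  have hE22 : ∀ q ∈ U, D2 (D2 u) q.1 q.2.1 q.2.2 = Ed v2 (Ed v2 F) q := T2 hA2 hE2
  have hE111 : ∀ q ∈ U, D1 (D1 (D1 u)) q.1 q.2.1 q.2.2 = Ed v1 (Ed v1 (Ed v1 F)) q :=
    T1 hA11 hE11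
  -- expansion of `Q2 u` (= `P3 u`)
  have hQ2E : ∀ q ∈ U, Q2 u q.1 q.2.1 q.2.2 = q.2.2 * Ed v2 F q - Ed v1 (Ed v1 F) q := by
    intro q hq
    show q.2.2 * D2 u q.1 q.2.1 q.2.2 - D1 (D1 u) q.1 q.2.1 q.2.2 = _
    rw [hE2 q hq, hE11 q hq]
  -- expansion of `∂₁ (Q2 u)`
  have hDQ2exp : ∀ q ∈ U, D1 (Q2 u) q.1 q.2.1 q.2.2
      = q.2.2 * Ed v1 (Ed v2 F) q - Ed v1 (Ed v1 (Ed v1 F)) q := by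
    intro q hq
    rw [D1_congrU hU (fun a b c => c * Ed v2 F (a, b, c) - Ed v1 (Ed v1 F) (a, b, c))
      (fun q hq => hQ2E q hq) hq]
    have h1 : HasDerivAt (fun w => Ed v2 F (w, q.2.1, q.2.2)) (Ed v1 (Ed v2 F) q) q.1 :=
      slice1_hasDerivAt ((hA2 q hq).differentiableAt)
    have h2 : HasDerivAt (fun w => Ed v1 (Ed v1 F) (w, q.2.1, q.2.2))
        (Ed v1 (Ed v1 (Ed v1 F)) q) q.1 :=
      slice1_hasDerivAt ((hA11 q hq).differentiableAt)
    exact ((h1.const_mul q.2.2).sub h2).deriv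
  constructor
  · -- P-system implies Q-system
    intro h p hp
    obtain ⟨hP1, _, hP3⟩ := h p hp
    have hZ : ∀ q ∈ U, Q2 u q.1 q.2.1 q.2.2 = 0 := fun q hq => (h q hq).2.2
    have keyA : p.2.2 * Ed v1 (Ed v2 F) p - Ed v1 (Ed v1 (Ed v1 F)) p = 0 :=
      (hDQ2exp p hp).symm.trans (D1_zeroU hU hZ hp)
    refine ⟨?_, hP3⟩
    have hP1' : 4 * Ed v1 (Ed v2 F) p + 2 * p.2.2 * p.2.1 * Ed v1 F p
        + p.2.2 ^ 2 * p.1 * u p.1 p.2.1 p.2.2 = 0 := by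
      have := hP1
      simp only [P1] at this
      rwa [hE12 p hp, hE1 p hp] at this
    show 4 * D1 (D1 (D1 u)) p.1 p.2.1 p.2.2 + 2 * p.2.2 ^ 2 * p.2.1 * D1 u p.1 p.2.1 p.2.2
        + p.2.2 ^ 3 * p.1 * u p.1 p.2.1 p.2.2 = 0
    rw [hE111 p hp, hE1 p hp]
    linear_combination p.2.2 * hP1' - 4 * keyA
  · -- Q-system implies P-system
    intro h p hp
    have hQ1 := (h p hp).1
    have hQ2 := (h p hp).2
    have hc : p.2.2 ≠ 0 := hη p hp
    have hZ : ∀ q ∈ U, Q2 u q.1 q.2.1 q.2.2 = 0 := fun q hq => (h q hq).2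
    have hZ1 : ∀ q ∈ U, D1 (Q2 u) q.1 q.2.1 q.2.2 = 0 := fun q hq => D1_zeroU hU hZ hq
    have keyA : p.2.2 * Ed v1 (Ed v2 F) p - Ed v1 (Ed v1 (Ed v1 F)) p = 0 :=
      (hDQ2exp p hp).symm.trans (hZ1 p hp)
    -- the value of Q2 at p
    have hQ2p : p.2.2 * Ed v2 F p - Ed v1 (Ed v1 F) p = 0 := (hQ2E p hp).symm.trans hQ2
    -- expansion of `Q1 u` on `U`
    have hQ1E : ∀ q ∈ U, Q1 u q.1 q.2.1 q.2.2 = 4 * Ed v1 (Ed v1 (Ed v1 F)) q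
        + 2 * q.2.2 ^ 2 * q.2.1 * Ed v1 F q + q.2.2 ^ 3 * q.1 * u q.1 q.2.1 q.2.2 := by
      intro q hq
      show 4 * D1 (D1 (D1 u)) q.1 q.2.1 q.2.2 + 2 * q.2.2 ^ 2 * q.2.1 * D1 u q.1 q.2.1 q.2.2
          + q.2.2 ^ 3 * q.1 * u q.1 q.2.1 q.2.2 = _
      rw [hE111 q hq, hE1 q hq]
    -- fact (i): ∂₁(Q1 u) = 0 at p, expanded
    have fact_i : 4 * Ed v1 (Ed v1 (Ed v1 (Ed v1 F))) p
        + 2 * p.2.2 ^ 2 * p.2.1 * Ed v1 (Ed v1 F) p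
        + p.2.2 ^ 3 * u p.1 p.2.1 p.2.2 + p.2.2 ^ 3 * p.1 * Ed v1 F p = 0 := by
      have hz : D1 (Q1 u) p.1 p.2.1 p.2.2 = 0 :=
        D1_zeroU hU (fun q hq => (h q hq).1) hp
      have hcg := D1_congrU hU
        (fun a b c => 4 * Ed v1 (Ed v1 (Ed v1 F)) (a, b, c)
          + 2 * c ^ 2 * b * Ed v1 F (a, b, c) + c ^ 3 * a * u a b c)
        (fun q hq => hQ1E q hq) hp
      have h111 : HasDerivAt (fun w => Ed v1 (Ed v1 (Ed v1 F)) (w, p.2.1, p.2.2))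
          (Ed v1 (Ed v1 (Ed v1 (Ed v1 F))) p) p.1 :=
        slice1_hasDerivAt ((hA111 p hp).differentiableAt)
      have h1 : HasDerivAt (fun w => Ed v1 F (w, p.2.1, p.2.2)) (Ed v1 (Ed v1 F) p) p.1 :=
        slice1_hasDerivAt ((hA1 p hp).differentiableAt)
      have hu1 : HasDerivAt (fun w => u w p.2.1 p.2.2) (Ed v1 F p) p.1 :=
        slice1_hasDerivAt ((hF p hp).differentiableAt)
      have hmul : HasDerivAt (fun w => p.2.2 ^ 3 * w * u w p.2.1 p.2.2)
          (p.2.2 ^ 3 * 1 * u p.1 p.2.1 p.2.2 + p.2.2 ^ 3 * p.1 * Ed v1 F p) p.1 :=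
        ((hasDerivAt_id p.1).const_mul (p.2.2 ^ 3)).mul hu1
      have hd := (((h111.const_mul 4).add (h1.const_mul (2 * p.2.2 ^ 2 * p.2.1))).add hmul).deriv
      have : 4 * Ed v1 (Ed v1 (Ed v1 (Ed v1 F))) p
          + 2 * p.2.2 ^ 2 * p.2.1 * Ed v1 (Ed v1 F) p
          + (p.2.2 ^ 3 * 1 * u p.1 p.2.1 p.2.2 + p.2.2 ^ 3 * p.1 * Ed v1 F p) = 0 := by
        calc 4 * Ed v1 (Ed v1 (Ed v1 (Ed v1 F))) p
            + 2 * p.2.2 ^ 2 * p.2.1 * Ed v1 (Ed v1 F) p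
            + (p.2.2 ^ 3 * 1 * u p.1 p.2.1 p.2.2 + p.2.2 ^ 3 * p.1 * Ed v1 F p)
            = deriv (fun w => 4 * Ed v1 (Ed v1 (Ed v1 F)) (w, p.2.1, p.2.2)
              + 2 * p.2.2 ^ 2 * p.2.1 * Ed v1 F (w, p.2.1, p.2.2)
              + p.2.2 ^ 3 * w * u w p.2.1 p.2.2) p.1 := hd.symm
          _ = D1 (Q1 u) p.1 p.2.1 p.2.2 := by
              rw [hcg]; rfl
          _ = 0 := hz
      linear_combination this
    -- fact (ii): ∂₂(Q2 u) = 0 at p, expanded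
    have fact_ii : p.2.2 * Ed v2 (Ed v2 F) p - Ed v2 (Ed v1 (Ed v1 F)) p = 0 := by
      have hz : D2 (Q2 u) p.1 p.2.1 p.2.2 = 0 := D2_zeroU hU hZ hp
      have hcg := D2_congrU hU
        (fun a b c => c * Ed v2 F (a, b, c) - Ed v1 (Ed v1 F) (a, b, c))
        (fun q hq => hQ2E q hq) hp
      have h1 : HasDerivAt (fun w => Ed v2 F (p.1, w, p.2.2)) (Ed v2 (Ed v2 F) p) p.2.1 :=
        slice2_hasDerivAt ((hA2 p hp).differentiableAt)
      have h2 : HasDerivAt (fun w => Ed v1 (Ed v1 F) (p.1, w, p.2.2))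
          (Ed v2 (Ed v1 (Ed v1 F)) p) p.2.1 :=
        slice2_hasDerivAt ((hA11 p hp).differentiableAt)
      have hd := ((h1.const_mul p.2.2).sub h2).deriv
      calc p.2.2 * Ed v2 (Ed v2 F) p - Ed v2 (Ed v1 (Ed v1 F)) p
          = deriv (fun w => p.2.2 * Ed v2 F (p.1, w, p.2.2)
            - Ed v1 (Ed v1 F) (p.1, w, p.2.2)) p.2.1 := hd.symm
        _ = D2 (Q2 u) p.1 p.2.1 p.2.2 := by rw [hcg]; rfl
        _ = 0 := hz
    -- fact (iii): ∂₁²(Q2 u) = 0 at p, expanded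
    have fact_iii : p.2.2 * Ed v1 (Ed v1 (Ed v2 F)) p - Ed v1 (Ed v1 (Ed v1 (Ed v1 F))) p = 0 := by
      have hz : D1 (D1 (Q2 u)) p.1 p.2.1 p.2.2 = 0 := D1_zeroU hU hZ1 hp
      have hcg := D1_congrU hU
        (fun a b c => c * Ed v1 (Ed v2 F) (a, b, c) - Ed v1 (Ed v1 (Ed v1 F)) (a, b, c))
        (fun q hq => hDQ2exp q hq) hp
      have h1 : HasDerivAt (fun w => Ed v1 (Ed v2 F) (w, p.2.1, p.2.2))
          (Ed v1 (Ed v1 (Ed v2 F)) p) p.1 :=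
        slice1_hasDerivAt ((hA12 p hp).differentiableAt)
      have h2 : HasDerivAt (fun w => Ed v1 (Ed v1 (Ed v1 F)) (w, p.2.1, p.2.2))
          (Ed v1 (Ed v1 (Ed v1 (Ed v1 F))) p) p.1 :=
        slice1_hasDerivAt ((hA111 p hp).differentiableAt)
      have hd := ((h1.const_mul p.2.2).sub h2).deriv
      calc p.2.2 * Ed v1 (Ed v1 (Ed v2 F)) p - Ed v1 (Ed v1 (Ed v1 (Ed v1 F))) p
          = deriv (fun w => p.2.2 * Ed v1 (Ed v2 F) (w, p.2.1, p.2.2)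
            - Ed v1 (Ed v1 (Ed v1 F)) (w, p.2.1, p.2.2)) p.1 := hd.symm
        _ = D1 (D1 (Q2 u)) p.1 p.2.1 p.2.2 := by rw [hcg]; rfl
        _ = 0 := hz
    -- fact (iv): symmetry of mixed partials
    have fact_iv : Ed v2 (Ed v1 (Ed v1 F)) p = Ed v1 (Ed v1 (Ed v2 F)) p := by
      have s1 : Ed v2 (Ed v1 (Ed v1 F)) p = Ed v1 (Ed v2 (Ed v1 F)) p :=
        Ed_symm hU hA1 hp v1 v2
      have s2 : Ed v1 (Ed v2 (Ed v1 F)) p = Ed v1 (Ed v1 (Ed v2 F)) p :=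
        Ed_congrU hU (fun q hq => Ed_symm hU hF hq v1 v2) hp v1
      exact s1.trans s2
    -- now conclude the three P-equations
    refine ⟨?_, ?_, hQ2⟩
    · -- P1
      have hgoal : p.2.2 * (4 * Ed v1 (Ed v2 F) p + 2 * p.2.2 * p.2.1 * Ed v1 F p
          + p.2.2 ^ 2 * p.1 * u p.1 p.2.1 p.2.2) = 0 := by
        have hQ1' : 4 * Ed v1 (Ed v1 (Ed v1 F)) p + 2 * p.2.2 ^ 2 * p.2.1 * Ed v1 F p
            + p.2.2 ^ 3 * p.1 * u p.1 p.2.1 p.2.2 = 0 := (hQ1E p hp).symm.trans hQ1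
        linear_combination hQ1' + 4 * keyA
      have := mul_eq_zero.mp hgoal
      rcases this with h' | h'
      · exact absurd h' hc
      · show 4 * D1 (D2 u) p.1 p.2.1 p.2.2 + 2 * p.2.2 * p.2.1 * D1 u p.1 p.2.1 p.2.2
            + p.2.2 ^ 2 * p.1 * u p.1 p.2.1 p.2.2 = 0
        rw [hE12 p hp, hE1 p hp]
        exact h'
    · -- P2
      have hgoal : p.2.2 ^ 2 * (4 * Ed v2 (Ed v2 F) p + p.2.2 * p.1 * Ed v1 F p
          + 2 * p.2.2 * p.2.1 * Ed v2 F p + p.2.2 * u p.1 p.2.1 p.2.2) = 0 := by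
        linear_combination fact_i + 4 * p.2.2 * fact_ii + 4 * fact_iii
          + 4 * p.2.2 * fact_iv + 2 * p.2.2 ^ 2 * p.2.1 * hQ2p
      have := mul_eq_zero.mp hgoal
      rcases this with h' | h'
      · exact absurd (pow_eq_zero_iff (n := 2) (by norm_num) |>.mp h') hc
      · show 4 * D2 (D2 u) p.1 p.2.1 p.2.2 + p.2.2 * p.1 * D1 u p.1 p.2.1 p.2.2
            + 2 * p.2.2 * p.2.1 * D2 u p.1 p.2.1 p.2.2 + p.2.2 * u p.1 p.2.1 p.2.2 = 0
        rw [hE22 p hp, hE1 p hp, hE2 p hp]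
        exact h'
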